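/- Let V₁,…,V_K be a partition of {1,…,N}, let 0 < γ ≤ 1, and let p ∈ ℝ₊^N satisfy p_i / p(V_k) ≥ γ whenever i ∈ V_k, where p(V_k) = ∑_{i∈V_k} p_i. Set α = 2(1 + log²(1/γ)) and define Ψ(p) = ∑_{k=1}^K √(p(V_k)) ∑_{i∈V_k} ψ_α(p_i/p(V_k)) with ψ_α(y) = y log y − α y. Then ∇²Ψ(p) ⪰ (1/2) diag(1/(p₁√(p(V(1)))), …, 1/(p_N √(p(V(N))))), where V(i) denotes the partition element containing i. -/

import Mathlib

open Real Finset

section TsallisAux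

variable {N : ℕ}

noncomputable def sQ (s : Finset (Fin N)) (q : Fin N → ℝ) : ℝ := ∑ i ∈ s, q i
noncomputable def sS (s : Finset (Fin N)) (q : Fin N → ℝ) : ℝ := ∑ i ∈ s, q i * Real.log (q i)
noncomputable def sT (s : Finset (Fin N)) (v q : Fin N → ℝ) : ℝ := ∑ i ∈ s, v i * Real.log (q i)

noncomputable def blockPsi (s : Finset (Fin N)) (α : ℝ) (q : Fin N → ℝ) : ℝ :=
  sS s q * (Real.sqrt (sQ s q))⁻¹
    + (-(Real.sqrt (sQ s q) * Real.log (sQ s q)) - α * Real.sqrt (sQ s q))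

noncomputable def blockG (s : Finset (Fin N)) (α : ℝ) (v q : Fin N → ℝ) : ℝ :=
  sT s v q * (Real.sqrt (sQ s q))⁻¹
  + sS s q * (-(∑ i ∈ s, v i) / (2 * sQ s q * Real.sqrt (sQ s q)))
  + (-((∑ i ∈ s, v i) * Real.log (sQ s q)) / (2 * Real.sqrt (sQ s q))
      - α * (∑ i ∈ s, v i) / (2 * Real.sqrt (sQ s q)))

noncomputable def D2val (s : Finset (Fin N)) (α : ℝ) (v q : Fin N → ℝ) : ℝ :=
  (∑ i ∈ s, (v i) ^ 2 / q i) / Real.sqrt (sQ s q)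
  - sT s v q * (∑ i ∈ s, v i) / (2 * sQ s q * Real.sqrt (sQ s q))
  - (sT s v q + ∑ i ∈ s, v i) * (∑ i ∈ s, v i) / (2 * sQ s q * Real.sqrt (sQ s q))
  + 3/4 * sS s q * (∑ i ∈ s, v i) ^ 2 / ((sQ s q) ^ 2 * Real.sqrt (sQ s q))
  - (∑ i ∈ s, v i) ^ 2 / (2 * sQ s q * Real.sqrt (sQ s q))
  + (∑ i ∈ s, v i) ^ 2 * Real.log (sQ s q) / (4 * sQ s q * Real.sqrt (sQ s q))
  + α * (∑ i ∈ s, v i) ^ 2 / (4 * sQ s q * Real.sqrt (sQ s q))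

lemma hasFDerivAt_sum_comp (s : Finset (Fin N)) (F : Fin N → ℝ → ℝ) (d : Fin N → ℝ)
    (q : Fin N → ℝ) (h : ∀ i ∈ s, HasDerivAt (F i) (d i) (q i)) :
    HasFDerivAt (fun q : Fin N → ℝ => ∑ i ∈ s, F i (q i))
      (∑ i ∈ s, d i • ContinuousLinearMap.proj (R := ℝ) (φ := fun _ : Fin N => ℝ) i) q := by
  refine HasFDerivAt.fun_sum fun i hi => ?_
  exact (h i hi).comp_hasFDerivAt q
    ((ContinuousLinearMap.proj (R := ℝ) (φ := fun _ : Fin N => ℝ) i).hasFDerivAt)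


lemma stage1 (s : Finset (Fin N)) (α : ℝ) (v q : Fin N → ℝ) (hq : ∀ i ∈ s, 0 < q i) :
    ∃ D : (Fin N → ℝ) →L[ℝ] ℝ, HasFDerivAt (blockPsi s α) D q ∧ D v = blockG s α v q := by
  rcases s.eq_empty_or_nonempty with rfl | hs
  · refine ⟨0, ?_, by simp [blockG, sQ, sS, sT]⟩
    have : blockPsi (∅ : Finset (Fin N)) α = fun _ => 0 := by
      funext q; simp [blockPsi, sQ, sS]
    rw [this]
    exact hasFDerivAt_const 0 q
  · have hQ0 : 0 < sQ s q := Finset.sum_pos (fun i hi => hq i hi) hs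
    have hrQ0 : 0 < Real.sqrt (sQ s q) := Real.sqrt_pos.mpr hQ0
    have hQ : HasFDerivAt (sQ s)
        (∑ i ∈ s, ContinuousLinearMap.proj (R := ℝ) (φ := fun _ : Fin N => ℝ) i) q := by
      refine HasFDerivAt.fun_sum fun i hi => ?_
      exact (ContinuousLinearMap.proj (R := ℝ) (φ := fun _ : Fin N => ℝ) i).hasFDerivAt
    have hS : HasFDerivAt (sS s)
        (∑ i ∈ s, (Real.log (q i) + 1) • ContinuousLinearMap.proj (R := ℝ)
          (φ := fun _ : Fin N => ℝ) i) q := by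
      refine hasFDerivAt_sum_comp s (fun i x => x * Real.log x) (fun i => Real.log (q i) + 1) q
        (fun i hi => ?_)
      have h := (hasDerivAt_id' (q i)).mul (Real.hasDerivAt_log (hq i hi).ne')
      refine h.congr_deriv ?_
      rw [mul_inv_cancel₀ (hq i hi).ne']; ring
    -- g1 = fun x => (√x)⁻¹
    have hg1 : HasDerivAt (fun x : ℝ => (Real.sqrt x)⁻¹)
        (-(1 / (2 * Real.sqrt (sQ s q))) / (Real.sqrt (sQ s q)) ^ 2) (sQ s q) :=
      (Real.hasDerivAt_sqrt hQ0.ne').inv hrQ0.ne'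
    have hc1 := hg1.comp_hasFDerivAt q hQ
    -- g2 = fun x => -(√x * log x) - α * √x
    have hg2 : HasDerivAt (fun x : ℝ => -(Real.sqrt x * Real.log x) - α * Real.sqrt x)
        (-(1 / (2 * Real.sqrt (sQ s q)) * Real.log (sQ s q) + Real.sqrt (sQ s q) * (sQ s q)⁻¹)
          - α * (1 / (2 * Real.sqrt (sQ s q)))) (sQ s q) := by
      exact (((Real.hasDerivAt_sqrt hQ0.ne').mul (Real.hasDerivAt_log hQ0.ne')).neg).sub
        ((Real.hasDerivAt_sqrt hQ0.ne').const_mul α)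
    have hc2 := hg2.comp_hasFDerivAt q hQ
    have htot := (hS.mul hc1).add hc2
    refine ⟨_, htot, ?_⟩
    have hQQ : Real.sqrt (sQ s q) * Real.sqrt (sQ s q) = sQ s q := Real.mul_self_sqrt hQ0.le
    simp only [ContinuousLinearMap.add_apply, ContinuousLinearMap.smul_apply,
      ContinuousLinearMap.coe_sum', Finset.sum_apply, ContinuousLinearMap.proj_apply,
      smul_eq_mul, Function.comp_apply]
    have hsplit : ∑ i ∈ s, (Real.log (q i) + 1) * v i = sT s v q + ∑ i ∈ s, v i := by
      rw [sT, ← Finset.sum_add_distrib]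
      exact Finset.sum_congr rfl fun i _ => by ring
    rw [hsplit, blockG]
    set rQ := Real.sqrt (sQ s q) with hrQ
    set Qv := sQ s q with hQv
    set lq := Real.log Qv with hlq
    rw [← hQQ]
    field_simp
    ring

lemma stage2 (s : Finset (Fin N)) (α : ℝ) (v q : Fin N → ℝ) (hq : ∀ i ∈ s, 0 < q i) :
    ∃ D : (Fin N → ℝ) →L[ℝ] ℝ, HasFDerivAt (blockG s α v) D q ∧ D v = D2val s α v q := by
  rcases s.eq_empty_or_nonempty with rfl | hs
  · refine ⟨0, ?_, by simp [D2val, sQ, sS, sT]⟩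
    have : blockG (∅ : Finset (Fin N)) α v = fun _ => 0 := by
      funext q; simp [blockG, sQ, sS, sT]
    rw [this]
    exact hasFDerivAt_const 0 q
  · have hQ0 : 0 < sQ s q := Finset.sum_pos (fun i hi => hq i hi) hs
    have hrQ0 : 0 < Real.sqrt (sQ s q) := Real.sqrt_pos.mpr hQ0
    have hQ : HasFDerivAt (sQ s)
        (∑ i ∈ s, ContinuousLinearMap.proj (R := ℝ) (φ := fun _ : Fin N => ℝ) i) q := by
      refine HasFDerivAt.fun_sum fun i hi => ?_
      exact (ContinuousLinearMap.proj (R := ℝ) (φ := fun _ : Fin N => ℝ) i).hasFDerivAt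
    have hS : HasFDerivAt (sS s)
        (∑ i ∈ s, (Real.log (q i) + 1) • ContinuousLinearMap.proj (R := ℝ)
          (φ := fun _ : Fin N => ℝ) i) q := by
      refine hasFDerivAt_sum_comp s (fun i x => x * Real.log x) (fun i => Real.log (q i) + 1) q
        (fun i hi => ?_)
      have h := (hasDerivAt_id' (q i)).mul (Real.hasDerivAt_log (hq i hi).ne')
      refine h.congr_deriv ?_
      rw [mul_inv_cancel₀ (hq i hi).ne']; ring
    have hT : HasFDerivAt (sT s v)
        (∑ i ∈ s, (v i * (q i)⁻¹) • ContinuousLinearMap.proj (R := ℝ)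
          (φ := fun _ : Fin N => ℝ) i) q := by
      refine hasFDerivAt_sum_comp s (fun i x => v i * Real.log x) (fun i => v i * (q i)⁻¹) q
        (fun i hi => ?_)
      exact (Real.hasDerivAt_log (hq i hi).ne').const_mul (v i)
    have hg1 : HasDerivAt (fun x : ℝ => (Real.sqrt x)⁻¹)
        (-(1 / (2 * Real.sqrt (sQ s q))) / (Real.sqrt (sQ s q)) ^ 2) (sQ s q) :=
      (Real.hasDerivAt_sqrt hQ0.ne').inv hrQ0.ne'
    -- g3 = fun x => -Vs / (2 * x * √x)
    have hden : HasDerivAt (fun x : ℝ => 2 * x * Real.sqrt x)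
        (2 * 1 * Real.sqrt (sQ s q) + 2 * sQ s q * (1 / (2 * Real.sqrt (sQ s q)))) (sQ s q) :=
      ((hasDerivAt_id (sQ s q)).const_mul 2).mul (Real.hasDerivAt_sqrt hQ0.ne')
    have hden0 : 2 * sQ s q * Real.sqrt (sQ s q) ≠ 0 := by positivity
    have hg3 : HasDerivAt (fun x : ℝ => -(∑ i ∈ s, v i) / (2 * x * Real.sqrt x))
        ((0 * (2 * sQ s q * Real.sqrt (sQ s q)) - -(∑ i ∈ s, v i) *
          (2 * 1 * Real.sqrt (sQ s q) + 2 * sQ s q * (1 / (2 * Real.sqrt (sQ s q)))))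
          / (2 * sQ s q * Real.sqrt (sQ s q)) ^ 2) (sQ s q) :=
      (hasDerivAt_const (sQ s q) (-(∑ i ∈ s, v i))).div hden hden0
    -- g4 = fun x => -(Vs * log x)/(2*√x) - α*Vs/(2*√x)
    have hden2 : HasDerivAt (fun x : ℝ => 2 * Real.sqrt x)
        (2 * (1 / (2 * Real.sqrt (sQ s q)))) (sQ s q) :=
      (Real.hasDerivAt_sqrt hQ0.ne').const_mul 2
    have hden20 : 2 * Real.sqrt (sQ s q) ≠ 0 := by positivity
    have hnum1 : HasDerivAt (fun x : ℝ => -((∑ i ∈ s, v i) * Real.log x))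
        (-((∑ i ∈ s, v i) * (sQ s q)⁻¹)) (sQ s q) :=
      ((Real.hasDerivAt_log hQ0.ne').const_mul (∑ i ∈ s, v i)).neg
    have hg4 : HasDerivAt (fun x : ℝ =>
        -((∑ i ∈ s, v i) * Real.log x) / (2 * Real.sqrt x)
          - α * (∑ i ∈ s, v i) / (2 * Real.sqrt x))
        ((-((∑ i ∈ s, v i) * (sQ s q)⁻¹) * (2 * Real.sqrt (sQ s q))
            - -((∑ i ∈ s, v i) * Real.log (sQ s q)) * (2 * (1 / (2 * Real.sqrt (sQ s q)))))
          / (2 * Real.sqrt (sQ s q)) ^ 2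
         - (0 * (2 * Real.sqrt (sQ s q)) - α * (∑ i ∈ s, v i) *
            (2 * (1 / (2 * Real.sqrt (sQ s q))))) / (2 * Real.sqrt (sQ s q)) ^ 2) (sQ s q) :=
      (hnum1.div hden2 hden20).sub ((hasDerivAt_const (sQ s q) (α * (∑ i ∈ s, v i))).div
        hden2 hden20)
    have hc1 := hg1.comp_hasFDerivAt q hQ
    have hc3 := hg3.comp_hasFDerivAt q hQ
    have hc4 := hg4.comp_hasFDerivAt q hQ
    have htot := (hT.mul hc1).add (hS.mul hc3) |>.add hc4
    refine ⟨_, htot, ?_⟩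
    have hQQ : Real.sqrt (sQ s q) * Real.sqrt (sQ s q) = sQ s q := Real.mul_self_sqrt hQ0.le
    simp only [ContinuousLinearMap.add_apply, ContinuousLinearMap.smul_apply,
      ContinuousLinearMap.coe_sum', Finset.sum_apply, ContinuousLinearMap.proj_apply,
      smul_eq_mul]
    have hsplit : ∑ i ∈ s, (Real.log (q i) + 1) * v i = sT s v q + ∑ i ∈ s, v i := by
      rw [sT, ← Finset.sum_add_distrib]
      exact Finset.sum_congr rfl fun i _ => by ring
    have hsplit2 : ∑ i ∈ s, (v i * (q i)⁻¹) * v i = ∑ i ∈ s, (v i) ^ 2 / q i := by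
      exact Finset.sum_congr rfl fun i _ => by rw [div_eq_mul_inv]; ring
    simp only [Function.comp_apply]
    rw [hsplit, hsplit2, D2val]
    have hrQne : Real.sqrt (sQ s q) ≠ 0 := hrQ0.ne'
    generalize hr : Real.sqrt (sQ s q) = rQ at hQQ hrQne ⊢
    generalize hl : Real.log (sQ s q) = lq
    rw [← hQQ]
    clear htot hc1 hc3 hc4 hg1 hg3 hg4 hT hS hQ hden hden2 hnum1 hsplit hsplit2
    set_option maxHeartbeats 1000000 in
    field_simp [hrQne]
    set_option maxHeartbeats 1000000 in
    ring

lemma alg (P rP lP W V C h' L α T2 Tlog S B : ℝ)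
    (hrP : rP ≠ 0) (hP : rP * rP = P)
    (hT2 : T2 = W + V^2/P) (hTlog : Tlog = V*lP - B) (hS : S = P*lP - h')
    (hB : B = C + (V/P)*h') (hα : α = 2*(1+L^2)) :
    T2 / rP - Tlog * V / (2 * P * rP) - (Tlog + V) * V / (2 * P * rP)
      + 3/4 * S * V^2 / (P^2 * rP) - V^2 / (2 * P * rP)
      + V^2 * lP / (4 * P * rP) + α * V^2 / (4 * P * rP)
    = (1/2)*(T2/rP)
      + ((1/2)*P^2*W + P*V*C + (1/4)*h'*V^2 + (L^2/2)*P*V^2)/(P^2*rP) := by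
  subst hα hTlog hS hB hT2
  rw [← hP]
  field_simp
  ring


lemma num_nonneg (P W C h' L V : ℝ) (hP : 0 < P) (hW0 : 0 ≤ W) (hh0 : 0 ≤ h')
    (hC2 : C^2 ≤ W * (L^2 * P)) :
    0 ≤ (1/2)*P^2*W + P*V*C + (1/4)*h'*V^2 + (L^2/2)*P*V^2 := by
  have t1 : P^2*V^2*C^2 ≤ P^2*V^2*(W*(L^2*P)) :=
    mul_le_mul_of_nonneg_left hC2 (mul_nonneg (sq_nonneg P) (sq_nonneg V))
  have hZ2 : (P*V*C)^2 ≤ ((1/2)*P^2*W + (L^2/2)*P*V^2)^2 := by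
    nlinarith [t1, sq_nonneg (P^2*W - L^2*P*V^2)]
  have hXY : 0 ≤ (1/2)*P^2*W + (L^2/2)*P*V^2 := by positivity
  have h1 : -((1/2)*P^2*W + (L^2/2)*P*V^2) ≤ P*V*C := by
    nlinarith [hZ2, hXY]
  nlinarith [mul_nonneg hh0 (sq_nonneg V)]


set_option maxHeartbeats 1000000 in
lemma block_ineq (s : Finset (Fin N)) (γ L α : ℝ) (hγ0 : 0 < γ) (hγ1 : γ ≤ 1)
    (hL : L = Real.log (1/γ)) (hα : α = 2*(1+L^2)) (p v : Fin N → ℝ)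
    (hp : ∀ i ∈ s, 0 < p i) (hr : ∀ i ∈ s, γ ≤ p i / sQ s p) :
    (1/2) * ∑ i ∈ s, (v i)^2 / (p i * Real.sqrt (sQ s p)) ≤ D2val s α v p := by
  rcases s.eq_empty_or_nonempty with rfl | hs
  · simp [D2val, sQ, sS, sT]
  have hP : 0 < sQ s p := Finset.sum_pos (fun i hi => hp i hi) hs
  have hrP : 0 < Real.sqrt (sQ s p) := Real.sqrt_pos.mpr hP
  have hQQ : Real.sqrt (sQ s p) * Real.sqrt (sQ s p) = sQ s p := Real.mul_self_sqrt hP.le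
  have hL0 : 0 ≤ L := by
    rw [hL]
    refine Real.log_nonneg ?_
    rw [le_div_iff₀ hγ0]; linarith
  -- the log-ratio function
  set ℓ : Fin N → ℝ := fun i => Real.log (sQ s p) - Real.log (p i) with hℓdef
  have hℓ0 : ∀ i ∈ s, 0 ≤ ℓ i := by
    intro i hi
    have : p i ≤ sQ s p := Finset.single_le_sum (fun j hj => (hp j hj).le) hi
    simp only [hℓdef, sub_nonneg]
    exact Real.log_le_log (hp i hi) this
  have hℓL : ∀ i ∈ s, ℓ i ≤ L := by
    intro i hi
    have h1 : γ * sQ s p ≤ p i := by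
      have := hr i hi
      rwa [le_div_iff₀ hP] at this
    have h2 : Real.log γ + Real.log (sQ s p) ≤ Real.log (p i) := by
      rw [← Real.log_mul hγ0.ne' hP.ne']
      exact Real.log_le_log (by positivity) h1
    have h3 : L = -Real.log γ := by rw [hL, one_div, Real.log_inv]
    simp only [hℓdef]; linarith
  -- decomposition
  set V : ℝ := ∑ i ∈ s, v i with hVdef
  set w : Fin N → ℝ := fun i => v i - (V / sQ s p) * p i with hwdef
  have hw : ∑ i ∈ s, w i = 0 := by
    simp only [hwdef]
    rw [Finset.sum_sub_distrib, ← Finset.mul_sum]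
    have : (∑ i ∈ s, p i) = sQ s p := rfl
    rw [this, div_mul_cancel₀ _ hP.ne', ← hVdef, sub_self]
  set W : ℝ := ∑ i ∈ s, (w i)^2 / p i with hWdef
  set C : ℝ := ∑ i ∈ s, w i * ℓ i with hCdef
  set M2 : ℝ := ∑ i ∈ s, p i * (ℓ i)^2 with hM2def
  set hh : ℝ := ∑ i ∈ s, p i * ℓ i with hhdef
  have hW0 : 0 ≤ W := Finset.sum_nonneg fun i hi => div_nonneg (sq_nonneg _) (hp i hi).le
  have hh0 : 0 ≤ hh := Finset.sum_nonneg fun i hi => mul_nonneg (hp i hi).le (hℓ0 i hi)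
  have hCS : C^2 ≤ W * M2 := by
    have := Finset.sum_mul_sq_le_sq_mul_sq s (fun i => w i / Real.sqrt (p i))
      (fun i => Real.sqrt (p i) * ℓ i)
    have e1 : ∑ i ∈ s, (w i / Real.sqrt (p i)) * (Real.sqrt (p i) * ℓ i) = C := by
      refine Finset.sum_congr rfl fun i hi => ?_
      have hsp : Real.sqrt (p i) ≠ 0 := (Real.sqrt_pos.mpr (hp i hi)).ne'
      field_simp
    have e2 : ∑ i ∈ s, (w i / Real.sqrt (p i))^2 = W := by
      refine Finset.sum_congr rfl fun i hi => ?_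
      rw [div_pow, Real.sq_sqrt (hp i hi).le]
    have e3 : ∑ i ∈ s, (Real.sqrt (p i) * ℓ i)^2 = M2 := by
      refine Finset.sum_congr rfl fun i hi => ?_
      rw [mul_pow, Real.sq_sqrt (hp i hi).le]
    rwa [e1, e2, e3] at this
  have hM2L : M2 ≤ L^2 * sQ s p := by
    have : M2 ≤ ∑ i ∈ s, p i * L^2 := by
      refine Finset.sum_le_sum fun i hi => ?_
      exact mul_le_mul_of_nonneg_left
        (pow_le_pow_left₀ (hℓ0 i hi) (hℓL i hi) 2) (hp i hi).le
    calc M2 ≤ ∑ i ∈ s, p i * L^2 := this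
      _ = L^2 * sQ s p := by rw [← Finset.sum_mul, sQ]; ring
  have hC2 : C^2 ≤ W * (L^2 * sQ s p) :=
    hCS.trans (mul_le_mul_of_nonneg_left hM2L hW0)
  -- identities
  have hT2 : (∑ i ∈ s, (v i)^2 / p i) = W + V^2 / sQ s p := by
    have step : ∀ i ∈ s, (v i)^2 / p i
        = (w i)^2 / p i + (2*(V / sQ s p)) * w i + (V / sQ s p)^2 * p i := by
      intro i hi
      have hpi : p i ≠ 0 := (hp i hi).ne'
      have hv : v i = w i + (V / sQ s p) * p i := by simp [hwdef]
      rw [hv]; field_simp; ring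
    rw [Finset.sum_congr rfl step]
    rw [Finset.sum_add_distrib, Finset.sum_add_distrib, ← Finset.mul_sum, ← Finset.mul_sum,
      hw, mul_zero]
    have : (∑ i ∈ s, p i) = sQ s p := rfl
    rw [this]
    field_simp
    ring
  have hTlog : sT s v p = V * Real.log (sQ s p) - ∑ i ∈ s, v i * ℓ i := by
    rw [sT, eq_sub_iff_add_eq, hVdef, Finset.sum_mul, ← Finset.sum_add_distrib]
    refine Finset.sum_congr rfl fun i hi => ?_
    simp only [hℓdef]; ring
  have hS : sS s p = sQ s p * Real.log (sQ s p) - hh := by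
    have e : sQ s p * Real.log (sQ s p) = ∑ i ∈ s, p i * Real.log (sQ s p) := by
      rw [sQ, Finset.sum_mul]
    rw [sS, eq_sub_iff_add_eq, hhdef, ← Finset.sum_add_distrib, e]
    refine Finset.sum_congr rfl fun i hi => ?_
    simp only [hℓdef]; ring
  have hB : (∑ i ∈ s, v i * ℓ i) = C + (V / sQ s p) * hh := by
    rw [hCdef, hhdef, Finset.mul_sum, ← Finset.sum_add_distrib]
    refine Finset.sum_congr rfl fun i hi => ?_
    have hv : v i = w i + (V / sQ s p) * p i := by simp [hwdef]
    rw [hv]; ring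
  -- main algebra
  have hid := alg (sQ s p) (Real.sqrt (sQ s p)) (Real.log (sQ s p)) W V C hh L α
    (∑ i ∈ s, (v i)^2 / p i) (sT s v p) (sS s p) (∑ i ∈ s, v i * ℓ i)
    hrP.ne' hQQ hT2 hTlog hS hB hα
  have hLHS : ∑ i ∈ s, (v i)^2 / (p i * Real.sqrt (sQ s p))
      = (∑ i ∈ s, (v i)^2 / p i) / Real.sqrt (sQ s p) := by
    rw [Finset.sum_div]
    exact Finset.sum_congr rfl fun i hi => (div_div _ _ _).symm
  have hNUM : 0 ≤ (1/2)*(sQ s p)^2*W + (sQ s p)*V*C + (1/4)*hh*V^2 + (L^2/2)*(sQ s p)*V^2 :=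
    num_nonneg (sQ s p) W C hh L V hP hW0 hh0 hC2
  rw [D2val, hid, hLHS]
  have hpos : (0:ℝ) ≤ ((1/2)*(sQ s p)^2*W + (sQ s p)*V*C + (1/4)*hh*V^2
      + (L^2/2)*(sQ s p)*V^2) / ((sQ s p)^2 * Real.sqrt (sQ s p)) :=
    div_nonneg hNUM (by positivity)
  linarith

end TsallisAux

/-- Hessian lower bound for the Tsallis-Shannon entropy
with respect to a partition `V₁,…,V_K` of `{1,…,N}`. -/
theorem tsallis_shannon_hessian_lower_bound
    {N K : ℕ} (V : Fin K → Finset (Fin N)) (idx : Fin N → Fin K)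
    (hmem : ∀ i, i ∈ V (idx i))
    (hpart : ∀ i k, i ∈ V k → k = idx i)
    (γ : ℝ) (hγ0 : 0 < γ) (hγ1 : γ ≤ 1)
    (p : Fin N → ℝ) (hp : ∀ i, 0 < p i)
    (hratio : ∀ i, γ ≤ p i / ∑ j ∈ V (idx i), p j)
    (α : ℝ) (hα : α = 2 * (1 + (Real.log (1/γ)) ^ 2))
    (Ψ : (Fin N → ℝ) → ℝ)
    (hΨ : ∀ q : Fin N → ℝ,
      Ψ q = ∑ k, Real.sqrt (∑ i ∈ V k, q i) *
        ∑ i ∈ V k, ((q i / ∑ j ∈ V k, q j) * Real.log (q i / ∑ j ∈ V k, q j)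
          - α * (q i / ∑ j ∈ V k, q j))) :
    ∀ v : Fin N → ℝ,
      (1/2) * ∑ i, (v i) ^ 2 / (p i * Real.sqrt (∑ j ∈ V (idx i), p j))
        ≤ fderiv ℝ (fun q => fderiv ℝ Ψ q v) p v := by
  intro v
  classical
  set U : Set (Fin N → ℝ) := {q | ∀ i, 0 < q i} with hUdef
  have hUopen : IsOpen U := by
    have : U = ⋂ i, {q : Fin N → ℝ | 0 < q i} := by
      ext q; simp [hUdef, Set.mem_iInter]
    rw [this]
    exact isOpen_iInter_of_finite fun i =>
      isOpen_lt continuous_const (continuous_apply i)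
  have hpU : p ∈ U := fun i => hp i
  -- Step 1 : Ψ agrees with the sum of block functions on U
  have hPsiEq : ∀ q ∈ U, Ψ q = ∑ k, blockPsi (V k) α q := by
    intro q hq
    rw [hΨ]
    refine Finset.sum_congr rfl fun k _ => ?_
    rcases (V k).eq_empty_or_nonempty with he | hne
    · simp [he, blockPsi, sQ, sS]
    · have hQ0 : 0 < sQ (V k) q := Finset.sum_pos (fun i _ => hq i) hne
      have hrQ0 : 0 < Real.sqrt (sQ (V k) q) := Real.sqrt_pos.mpr hQ0
      have hQQ : Real.sqrt (sQ (V k) q) * Real.sqrt (sQ (V k) q) = sQ (V k) q :=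
        Real.mul_self_sqrt hQ0.le
      have hpt : ∀ i ∈ V k, (q i / ∑ j ∈ V k, q j) * Real.log (q i / ∑ j ∈ V k, q j)
          - α * (q i / ∑ j ∈ V k, q j)
          = (q i * Real.log (q i) - q i * Real.log (sQ (V k) q) - α * q i) / sQ (V k) q := by
        intro i hi
        rw [show (∑ j ∈ V k, q j) = sQ (V k) q from rfl,
          Real.log_div (hq i).ne' hQ0.ne']
        field_simp
      rw [Finset.sum_congr rfl hpt,
        ← Finset.sum_div, Finset.sum_sub_distrib, Finset.sum_sub_distrib,
        ← Finset.sum_mul, ← Finset.mul_sum,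
        show (∑ i ∈ V k, q i * Real.log (q i)) = sS (V k) q from rfl,
        show (∑ i ∈ V k, q i) = sQ (V k) q from rfl, blockPsi]
      have hrne : Real.sqrt (sQ (V k) q) ≠ 0 := hrQ0.ne'
      generalize hr : Real.sqrt (sQ (V k) q) = rQ at hQQ hrne ⊢
      generalize hlg : Real.log (sQ (V k) q) = lq
      rw [← hQQ]
      field_simp
      ring
  -- Step 2 : on U the derivative of Ψ in direction v is the sum of blockG
  have hFder : ∀ q ∈ U, fderiv ℝ Ψ q v = ∑ k, blockG (V k) α v q := by
    intro q hq
    choose D hD hDv using fun k => stage1 (V k) α v q (fun i _ => hq i)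
    have hsum : HasFDerivAt (fun q' => ∑ k, blockPsi (V k) α q') (∑ k, D k) q :=
      HasFDerivAt.fun_sum fun k _ => hD k
    have heq : Ψ =ᶠ[nhds q] fun q' => ∑ k, blockPsi (V k) α q' :=
      Filter.eventuallyEq_of_mem (hUopen.mem_nhds hq) hPsiEq
    rw [heq.fderiv_eq, hsum.fderiv, ContinuousLinearMap.sum_apply]
    exact Finset.sum_congr rfl fun k _ => hDv k
  -- Step 3 : differentiate again at p
  have hF : (fun q => fderiv ℝ Ψ q v) =ᶠ[nhds p] fun q => ∑ k, blockG (V k) α v q :=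
    Filter.eventuallyEq_of_mem (hUopen.mem_nhds hpU) hFder
  choose D2 hD2 hD2v using fun k => stage2 (V k) α v p (fun i _ => hp i)
  have hsum2 : HasFDerivAt (fun q => ∑ k, blockG (V k) α v q) (∑ k, D2 k) p :=
    HasFDerivAt.fun_sum fun k _ => hD2 k
  have hfd : fderiv ℝ (fun q => fderiv ℝ Ψ q v) p v = ∑ k, D2val (V k) α v p := by
    rw [hF.fderiv_eq, hsum2.fderiv, ContinuousLinearMap.sum_apply]
    exact Finset.sum_congr rfl fun k _ => hD2v k
  rw [hfd]
  -- Step 4 : regroup the left-hand side over the partition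
  have hVk : ∀ k, V k = Finset.univ.filter (fun i => idx i = k) := by
    intro k; ext i
    simp only [Finset.mem_filter, Finset.mem_univ, true_and]
    constructor
    · intro hi; exact (hpart i k hi).symm
    · intro h; rw [← h]; exact hmem i
  have hregroup : ∑ i, (v i) ^ 2 / (p i * Real.sqrt (∑ j ∈ V (idx i), p j))
      = ∑ k, ∑ i ∈ V k, (v i) ^ 2 / (p i * Real.sqrt (sQ (V k) p)) := by
    rw [← Finset.sum_fiberwise Finset.univ idx
      (fun i => (v i) ^ 2 / (p i * Real.sqrt (∑ j ∈ V (idx i), p j)))]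
    refine Finset.sum_congr rfl fun k _ => ?_
    rw [show Finset.univ.filter (fun i => idx i = k) = V k from (hVk k).symm]
    refine Finset.sum_congr rfl fun i hi => ?_
    rw [← hpart i k hi]
    rfl
  rw [hregroup, Finset.mul_sum]
  refine Finset.sum_le_sum fun k _ => ?_
  refine block_ineq (V k) γ (Real.log (1/γ)) α hγ0 hγ1 rfl hα p v
    (fun i _ => hp i) (fun i hi => ?_)
  have hik : k = idx i := hpart i k hi
  rw [hik]
  exact hratio i
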